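/- If G is a hypergraph on n vertices that is Laplacian (1/q)-integral for some q ∈ ℕ, then its m-uniform complement Ḡ is Laplacian (1/(q(n−1)))-integral. -/

import Mathlib

open Finset

/-- The hypergraph Laplacian as an operator on real-valued vertex functions:
`(L_G f)(v) = ∑_{e ∋ v} (1/(|e|-1)) ∑_{u ∈ e} (f v - f u)`. -/
noncomputable def lapOp {V : Type} [Fintype V] [DecidableEq V] (E : Finset (Finset V)) (f : V → ℝ) : V → ℝ :=
  fun v => ∑ e ∈ E.filter (fun e => v ∈ e), (1 / ((e.card : ℝ) - 1)) * ∑ u ∈ e, (f v - f u)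

/-- The matrix of the hypergraph Laplacian. -/
noncomputable def lapMatrix {V : Type} [Fintype V] [DecidableEq V] (E : Finset (Finset V)) : Matrix V V ℝ :=
  Matrix.of fun v w => ∑ e ∈ E.filter (fun e => v ∈ e),
    (1 / ((e.card : ℝ) - 1)) * ((if w = v then (e.card : ℝ) else 0) - (if w ∈ e then 1 else 0))

/-- Edge set obtained from `E` by adding a `k`-dominating set `S = Fin k` of fresh vertices:
the new edges are `S ∪ {u}` for every old vertex `u`. -/
def domEdges {V : Type} [Fintype V] [DecidableEq V] (E : Finset (Finset V)) (k : ℕ) :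
    Finset (Finset (V ⊕ Fin k)) :=
  E.image (Finset.image Sum.inl) ∪
    (Finset.univ : Finset V).image
      (fun u => insert (Sum.inl u) ((Finset.univ : Finset (Fin k)).image Sum.inr))


lemma sum_lapOp {V : Type} [Fintype V] [DecidableEq V] (E : Finset (Finset V)) (f : V → ℝ) :
    ∑ v, lapOp E f v = 0 := by
  unfold lapOp
  simp_rw [Finset.sum_filter]
  rw [Finset.sum_comm]
  refine Finset.sum_eq_zero fun e _ => ?_
  rw [← Finset.sum_filter]
  have : ∑ v ∈ Finset.univ.filter (fun v => v ∈ e), (1 / ((e.card : ℝ) - 1)) * ∑ u ∈ e, (f v - f u)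
      = (1 / ((e.card : ℝ) - 1)) * ∑ v ∈ e, ∑ u ∈ e, (f v - f u) := by
    rw [Finset.mul_sum]
    apply Finset.sum_congr
    · ext v; simp
    · intros; rfl
  rw [this]
  have : ∑ v ∈ e, ∑ u ∈ e, (f v - f u) = 0 := by
    simp_rw [Finset.sum_sub_distrib]
    rw [Finset.sum_comm (f := fun v u => f u)]
    ring_nf
  rw [this, mul_zero]

lemma lapOp_union {V : Type} [Fintype V] [DecidableEq V] (A B : Finset (Finset V))
    (hAB : Disjoint A B) (f : V → ℝ) (v : V) :
    lapOp (A ∪ B) f v = lapOp A f v + lapOp B f v := by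
  unfold lapOp
  rw [Finset.filter_union, Finset.sum_union (Finset.disjoint_filter_filter hAB)]

lemma count_pair {V : Type} [Fintype V] [DecidableEq V] {v u : V} (hne : u ≠ v)
    (mu : ℕ) (hmu : 2 ≤ mu) :
    ((Finset.univ.powersetCard mu).filter (fun e => v ∈ e ∧ u ∈ e)).card =
      Nat.choose (Fintype.card V - 2) (mu - 2) := by
  have hcard : ((Finset.univ : Finset V) \ {v, u}).card = Fintype.card V - 2 := by
    rw [Finset.card_sdiff_of_subset (by simp), Finset.card_pair hne.symm, Finset.card_univ]
  rw [← hcard, ← Finset.card_powersetCard]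
  refine Finset.card_bij' (fun e _ => e \ {v, u}) (fun a _ => insert v (insert u a)) ?hi ?hj ?li ?ri
  case hi =>
    intro e he
    simp only [Finset.mem_filter, Finset.mem_powersetCard] at he
    obtain ⟨⟨hsub, hc⟩, hv, hu⟩ := he
    rw [Finset.mem_powersetCard]
    constructor
    · intro x hx; simp only [Finset.mem_sdiff] at hx ⊢; exact ⟨Finset.mem_univ x, hx.2⟩
    · rw [Finset.card_sdiff_of_subset (by intro x hx; simp at hx; rcases hx with h|h <;> subst h <;> assumption),
        Finset.card_pair hne.symm, hc]
  case hj =>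
    intro a ha
    rw [Finset.mem_powersetCard] at ha
    obtain ⟨hsub, hc⟩ := ha
    have hva : v ∉ a := fun h => by have := hsub h; simp at this
    have hua : u ∉ a := fun h => by have := hsub h; simp at this
    simp only [Finset.mem_filter, Finset.mem_powersetCard]
    refine ⟨⟨Finset.subset_univ _, ?_⟩, by simp, by simp⟩
    rw [Finset.card_insert_of_notMem (by simp [hva, hne.symm]), Finset.card_insert_of_notMem hua, hc]
    omega
  case li =>
    intro e he
    simp only [Finset.mem_filter, Finset.mem_powersetCard] at he
    obtain ⟨⟨hsub, hc⟩, hv, hu⟩ := he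
    ext x
    simp only [Finset.mem_insert, Finset.mem_sdiff, Finset.mem_insert, Finset.mem_singleton]
    constructor
    · rintro (rfl | rfl | ⟨hx, _⟩) <;> assumption
    · intro hx
      by_cases h1 : x = v
      · exact Or.inl h1
      by_cases h2 : x = u
      · exact Or.inr (Or.inl h2)
      · exact Or.inr (Or.inr ⟨hx, by tauto⟩)
  case ri =>
    intro a ha
    rw [Finset.mem_powersetCard] at ha
    obtain ⟨hsub, hc⟩ := ha
    have hva : v ∉ a := fun h => by have := hsub h; simp at this
    have hua : u ∉ a := fun h => by have := hsub h; simp at this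
    ext x
    simp only [Finset.mem_sdiff, Finset.mem_insert, Finset.mem_singleton]
    constructor
    · rintro ⟨(rfl | rfl | hx), hx2⟩ <;> tauto
    · intro hx; refine ⟨Or.inr (Or.inr hx), ?_⟩
      rintro (rfl | rfl) <;> [exact hva hx; exact hua hx]

lemma lapOp_complete {V : Type} [Fintype V] [DecidableEq V] (mu : ℕ) (hmu : 2 ≤ mu)
    (f : V → ℝ) (v : V) :
    lapOp (Finset.univ.powersetCard mu) f v =
      ((Nat.choose (Fintype.card V - 2) (mu - 2) : ℝ) / ((mu : ℝ) - 1)) *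
        ((Fintype.card V : ℝ) * f v - ∑ u, f u) := by
  unfold lapOp
  have hstep : ∀ e ∈ (Finset.univ.powersetCard mu).filter (fun e => v ∈ e),
      (1 / ((e.card : ℝ) - 1)) * ∑ u ∈ e, (f v - f u)
        = (1 / ((mu : ℝ) - 1)) * ∑ u ∈ Finset.univ, (if u ∈ e then f v - f u else 0) := by
    intro e he
    simp only [Finset.mem_filter, Finset.mem_powersetCard] at he
    rw [he.1.2, Finset.sum_ite_mem, Finset.univ_inter]
  rw [Finset.sum_congr rfl hstep, ← Finset.mul_sum, Finset.sum_comm]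
  have hcount : ∀ u : V,
      ∑ e ∈ (Finset.univ.powersetCard mu).filter (fun e => v ∈ e), (if u ∈ e then f v - f u else 0)
        = (Nat.choose (Fintype.card V - 2) (mu - 2) : ℝ) * (f v - f u) := by
    intro u
    by_cases hu : u = v
    · subst hu
      simp
    · rw [← Finset.sum_filter, Finset.sum_const, Finset.filter_filter,
        count_pair (Ne.symm (fun h => hu h.symm)) mu hmu, nsmul_eq_mul]
  rw [Finset.sum_congr rfl (fun u _ => hcount u), ← Finset.mul_sum]
  have : ∑ u : V, (f v - f u) = (Fintype.card V : ℝ) * f v - ∑ u, f u := by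
    rw [Finset.sum_sub_distrib, Finset.sum_const, Finset.card_univ, nsmul_eq_mul]
  rw [this]
  ring

/-- If an `m`-uniform hypergraph on `n` vertices is Laplacian `(1/q)`-integral, then its
complement is Laplacian `(1/(q(n-1)))`-integral. -/
theorem stmt_14 {V : Type} [Fintype V] [DecidableEq V]
    (mu : ℕ) (hmu : 2 ≤ mu) (E : Finset (Finset V)) (hE : ∀ e ∈ E, e.card = mu)
    (q : ℕ) (hq : 0 < q)
    (h : ∀ (lam : ℝ) (f : V → ℝ), f ≠ 0 → lapOp E f = lam • f →
      ∃ p : ℤ, lam = (p : ℝ) / q) :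
    ∀ (lam : ℝ) (f : V → ℝ), f ≠ 0 →
      lapOp ((Finset.univ.powersetCard mu) \ E) f = lam • f →
      ∃ p : ℤ, lam = (p : ℝ) / ((q : ℝ) * ((Fintype.card V : ℝ) - 1)) := by
  intro lam f hf heig
  by_cases hl : lam = 0
  · exact ⟨0, by simp [hl]⟩
  set n := Fintype.card V with hn
  -- the sum of f vanishes
  have hsum : ∑ v, f v = 0 := by
    have h0 := sum_lapOp ((Finset.univ.powersetCard mu) \ E) f
    rw [heig] at h0
    simp only [Pi.smul_apply, smul_eq_mul, ← Finset.mul_sum] at h0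
    exact (mul_eq_zero.1 h0).resolve_left hl
  obtain ⟨v0, hv0⟩ := Function.ne_iff.1 hf
  have hv0' : f v0 ≠ 0 := by simpa using hv0
  -- n ≥ mu
  have hnmu : mu ≤ n := by
    by_contra hlt
    have hKe : (Finset.univ.powersetCard mu : Finset (Finset V)) = ∅ :=
      Finset.powersetCard_eq_empty.2 (by rw [Finset.card_univ]; omega)
    have : lapOp ((Finset.univ.powersetCard mu) \ E) f v0 = 0 := by
      rw [hKe]; simp [lapOp]
    rw [heig] at this
    simp only [Pi.smul_apply, smul_eq_mul] at this
    exact hl ((mul_eq_zero.1 this).resolve_right hv0')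
  have h2n : 2 ≤ n := le_trans hmu hnmu
  set c := (Nat.choose (n - 2) (mu - 2) : ℝ) / ((mu : ℝ) - 1) with hc
  have hK : E ⊆ Finset.univ.powersetCard mu := fun e he =>
    Finset.mem_powersetCard.2 ⟨Finset.subset_univ _, hE e he⟩
  have heigE : lapOp E f = (c * n - lam) • f := by
    funext v
    have h1 := lapOp_complete mu hmu f v
    have h2 : lapOp (Finset.univ.powersetCard mu) f v
        = lapOp E f v + lapOp ((Finset.univ.powersetCard mu) \ E) f v := by
      rw [← lapOp_union E _ Finset.disjoint_sdiff f v, Finset.union_sdiff_of_subset hK]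
    rw [h1, hsum] at h2
    have h3 : lapOp ((Finset.univ.powersetCard mu) \ E) f v = lam * f v := by
      rw [heig]; simp
    rw [h3] at h2
    simp only [Pi.smul_apply, smul_eq_mul]
    rw [← hn] at h2
    rw [← hc] at h2
    linarith
  obtain ⟨p, hp⟩ := h (c * n - lam) f hf heigE
  refine ⟨(q : ℤ) * ((n : ℤ) * Nat.choose (n - 1) (mu - 1)) - p * ((n : ℤ) - 1), ?_⟩
  have hid : (mu - 1) * Nat.choose (n - 1) (mu - 1) = (n - 1) * Nat.choose (n - 2) (mu - 2) := by
    have h4 := Nat.add_one_mul_choose_eq (n - 2) (mu - 2)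
    have e1 : n - 2 + 1 = n - 1 := by omega
    have e2 : mu - 2 + 1 = mu - 1 := by omega
    rw [e1, e2] at h4
    rw [mul_comm]
    exact h4.symm
  have hidR : ((mu : ℝ) - 1) * (Nat.choose (n - 1) (mu - 1) : ℝ)
      = ((n : ℝ) - 1) * (Nat.choose (n - 2) (mu - 2) : ℝ) := by
    have := congrArg (Nat.cast : ℕ → ℝ) hid
    push_cast [Nat.cast_sub (by omega : 1 ≤ mu), Nat.cast_sub (by omega : 1 ≤ n)] at this
    exact this
  have hq' : (q : ℝ) ≠ 0 := Nat.cast_ne_zero.2 hq.ne'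
  have hmu' : (mu : ℝ) - 1 ≠ 0 := by
    have : (2 : ℝ) ≤ (mu : ℝ) := by exact_mod_cast hmu
    linarith
  have hn1 : (n : ℝ) - 1 ≠ 0 := by
    have : (2 : ℝ) ≤ (n : ℝ) := by exact_mod_cast h2n
    linarith
  have hlam : lam = c * n - (p : ℝ) / q := by linarith
  rw [hlam, hc]
  push_cast
  field_simp
  linear_combination (-(n : ℝ) * (q : ℝ)) * hidR
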